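/- Distribution of the minimum null generalized p-value: under (D1)–(D4) and (A1)–(A2), for every w ∈ [0,1], P(min_{m∈𝓜₀} α_m > w) = ∏_{m∈𝓜₀} (1 − A_m(w)). -/

import Mathlib

/-!
Statement 12: Distribution of the minimum null generalized p-value. Under
(D1)–(D4) and (A1)–(A2), for every w ∈ [0,1],
P(min_{m∈𝓜₀} α_m > w) = ∏_{m∈𝓜₀} (1 - A_m(w)).
-/

open MeasureTheory ProbabilityTheory Function Set

noncomputable section

/-- The generalized p-value statistic `α_m = inf {α ∈ [0,1] : δ_m(A_m(α)) = 1}`. -/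
def genP {X ι : Type*} (A : ι → ℝ → ℝ) (δ : ι → ℝ → X → ℝ) (m : ι) (x : X) : ℝ :=
  sInf {α ∈ Set.Icc (0:ℝ) 1 | δ m (A m α) x = 1}

/-- The σ-algebra generated by the decision process `α ↦ δ_m(α)`, `α ∈ [0,1]`. -/
def procSigma {X : Type*} (δm : ℝ → X → ℝ) : MeasurableSpace X :=
  ⨆ α ∈ Set.Icc (0:ℝ) 1, MeasurableSpace.comap (δm α) Real.measurableSpace

/-- Pointwise characterization: for a "good" point `x`,
`w < genP A δ m x ↔ δ m (A m w) x = 0`. -/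
lemma genP_gt_iff {X ι : Type*} (A : ι → ℝ → ℝ) (δ : ι → ℝ → X → ℝ) (m : ι) (x : X)
    (hvals : ∀ α ∈ Set.Icc (0:ℝ) 1, δ m α x = 0 ∨ δ m α x = 1)
    (h1 : δ m 1 x = 1)
    (hmono : MonotoneOn (fun α => δ m α x) (Set.Icc 0 1))
    (hrc : ∀ α ∈ Set.Ico (0:ℝ) 1, ContinuousWithinAt (fun β => δ m β x) (Set.Ici α) α)
    (hArange : ∀ α ∈ Set.Icc (0:ℝ) 1, A m α ∈ Set.Icc (0:ℝ) 1)
    (hA11 : A m 1 = 1)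
    (hAc : ContinuousOn (A m) (Set.Icc 0 1)) (hAm : StrictMonoOn (A m) (Set.Icc 0 1))
    (w : ℝ) (hw : w ∈ Set.Icc (0:ℝ) 1) :
    w < genP A δ m x ↔ δ m (A m w) x = 0 := by
  set S : Set ℝ := {α ∈ Set.Icc (0:ℝ) 1 | δ m (A m α) x = 1} with hS
  have hS1 : (1:ℝ) ∈ S := ⟨⟨zero_le_one, le_refl 1⟩, by rw [hA11]; exact h1⟩
  have hbdd : BddBelow S := ⟨0, fun α hα => hα.1.1⟩
  have hAw : A m w ∈ Set.Icc (0:ℝ) 1 := hArange w hw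
  constructor
  · -- w < genP → δ m (A m w) x = 0
    intro h
    rcases hvals (A m w) hAw with h0 | hone
    · exact h0
    · exfalso
      have hwS : w ∈ S := ⟨hw, hone⟩
      have : genP A δ m x ≤ w := csInf_le hbdd hwS
      linarith
  · -- δ m (A m w) x = 0 → w < genP
    intro h0w
    have hAwlt : A m w < 1 := by
      rcases lt_or_eq_of_le hAw.2 with h | h
      · exact h
      · exfalso; rw [h] at h0w; rw [h1] at h0w; norm_num at h0w
    have hwlt : w < 1 := by
      rcases lt_or_eq_of_le hw.2 with h | h
      · exact h
      · exfalso; rw [h, hA11] at hAwlt; exact lt_irrefl 1 hAwlt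
    -- right-continuity of δ at A m w
    have hrc' := hrc (A m w) ⟨hAw.1, hAwlt⟩
    have hten : Filter.Tendsto (fun β => δ m β x) (nhdsWithin (A m w) (Set.Ici (A m w)))
        (nhds (0:ℝ)) := by
      have := hrc'
      rw [ContinuousWithinAt] at this
      rwa [h0w] at this
    have hev : (fun β => δ m β x) ⁻¹' Set.Iio (1/2) ∈
        nhdsWithin (A m w) (Set.Ici (A m w)) :=
      hten (Iio_mem_nhds (by norm_num))
    obtain ⟨u, hu, hIco⟩ := (mem_nhdsGE_iff_exists_Ico_subset).1 hev
    have hu' : A m w < u := hu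
    -- continuity of A at w within Icc 0 1
    have hAcw := hAc w hw
    have hev2 : (A m) ⁻¹' Set.Iio u ∈ nhdsWithin w (Set.Icc 0 1) :=
      hAcw (Iio_mem_nhds hu')
    rw [Metric.mem_nhdsWithin_iff] at hev2
    obtain ⟨ε, hε, hball⟩ := hev2
    set c : ℝ := min (w + ε/2) 1 with hc
    have hwc : w < c := lt_min (by linarith) hwlt
    have hlb : ∀ α ∈ S, c ≤ α := by
      intro α hα
      by_contra hlt
      push_neg at hlt
      have hα01 : α ∈ Set.Icc (0:ℝ) 1 := hα.1
      have hδ1 : δ m (A m α) x = 1 := hα.2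
      rcases le_or_gt α w with hle | hgt
      · -- monotone case
        have hAle : A m α ≤ A m w := hAm.monotoneOn hα01 hw hle
        have : δ m (A m α) x ≤ δ m (A m w) x :=
          hmono (hArange α hα01) hAw hAle
        rw [h0w, hδ1] at this
        norm_num at this
      · -- right-continuity case: w < α < w + ε/2
        have hαlt : α < w + ε/2 := lt_of_lt_of_le hlt (min_le_left _ _)
        have hball' : α ∈ Metric.ball w ε := by
          rw [Metric.mem_ball, Real.dist_eq, abs_lt]
          constructor <;> linarith
        have hAu : A m α < u := hball ⟨hball', hα01⟩
        have hAge : A m w ≤ A m α := hAm.monotoneOn hw hα01 (le_of_lt hgt)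
        have : δ m (A m α) x < 1/2 := hIco ⟨hAge, hAu⟩
        rw [hδ1] at this
        norm_num at this
    have : c ≤ genP A δ m x := le_csInf ⟨1, hS1⟩ hlb
    linarith

/-- **Distribution of the minimum null generalized p-value.** -/
theorem min_null_generalized_pvalue_distribution
    {X ι : Type*} [MeasurableSpace X] [Fintype ι] [DecidableEq ι] [Nonempty ι]
    (P : Measure X) [IsProbabilityMeasure P]
    (M0 M1 : Finset ι) (hpart : M0 ∪ M1 = Finset.univ) (hdisj : Disjoint M0 M1)
    (hM0 : M0.Nonempty)
    (δ : ι → ℝ → X → ℝ) (A : ι → ℝ → ℝ)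
    (hmeas : ∀ m, ∀ α ∈ Set.Icc (0:ℝ) 1, Measurable (δ m α))
    (hvals : ∀ m, ∀ α ∈ Set.Icc (0:ℝ) 1, ∀ x, δ m α x = 0 ∨ δ m α x = 1)
    -- (D1)
    (hD1 : ∀ m, ∀ᵐ x ∂P, δ m 0 x = 0 ∧ δ m 1 x = 1)
    -- (D2)
    (hD2 : ∀ᵐ x ∂P, ∀ m, MonotoneOn (fun α => δ m α x) (Set.Icc 0 1) ∧
      ∀ α ∈ Set.Ico (0:ℝ) 1, ContinuousWithinAt (fun β => δ m β x) (Set.Ici α) α)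
    -- (D3)
    (hD3a : Indep (⨆ m ∈ M0, procSigma (δ m)) (⨆ m ∈ M1, procSigma (δ m)) P)
    (hD3b : iIndep (fun m : {m // m ∈ M0} => procSigma (δ (m : ι))) P)
    -- (D4)
    (hD4 : ∀ m ∈ M0, ∀ α ∈ Set.Icc (0:ℝ) 1, ∫ x, δ m α x ∂P = α)
    -- (A1)–(A2)
    (hArange : ∀ m, ∀ α ∈ Set.Icc (0:ℝ) 1, A m α ∈ Set.Icc (0:ℝ) 1)
    (hA1 : ∀ m, A m 0 = 0 ∧ A m 1 = 1)
    (hA2 : ∀ m, ContinuousOn (A m) (Set.Icc 0 1) ∧ StrictMonoOn (A m) (Set.Icc 0 1))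
    (w : ℝ) (hw : w ∈ Set.Icc (0:ℝ) 1) :
    P {x | w < M0.inf' hM0 (fun m => genP A δ m x)} =
      ENNReal.ofReal (∏ m ∈ M0, (1 - A m w)) := by
  classical
  set E : ι → Set X := fun m => (δ m (A m w)) ⁻¹' {0} with hE
  -- Step 1: a.e. equality of the two events
  have hD1' : ∀ᵐ x ∂P, ∀ m, δ m 0 x = 0 ∧ δ m 1 x = 1 := ae_all_iff.mpr hD1
  have hae : {x | w < M0.inf' hM0 (fun m => genP A δ m x)} =ᵐ[P] ⋂ m ∈ M0, E m := by
    rw [Filter.eventuallyEq_set]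
    filter_upwards [hD1', hD2] with x h1 h2
    simp only [Set.mem_setOf_eq, Set.mem_iInter, hE, Set.mem_preimage,
      Set.mem_singleton_iff]
    rw [Finset.lt_inf'_iff]
    constructor
    · intro h m hm
      exact (genP_gt_iff A δ m x (fun α hα => hvals m α hα x) (h1 m).2 (h2 m).1 (h2 m).2
        (hArange m) (hA1 m).2 (hA2 m).1 (hA2 m).2 w hw).1 (h m hm)
    · intro h m hm
      exact (genP_gt_iff A δ m x (fun α hα => hvals m α hα x) (h1 m).2 (h2 m).1 (h2 m).2
        (hArange m) (hA1 m).2 (hA2 m).1 (hA2 m).2 w hw).2 (h m hm)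
  -- Step 2: independence gives factorization
  have hEmeas : ∀ m, MeasurableSet[procSigma (δ m)] (E m) := by
    intro m
    have hle : MeasurableSpace.comap (δ m (A m w)) Real.measurableSpace ≤ procSigma (δ m) := by
      simp only [procSigma]
      exact le_biSup (fun α => MeasurableSpace.comap (δ m α) Real.measurableSpace)
        (hArange m w hw)
    exact hle _ ⟨{0}, measurableSet_singleton 0, rfl⟩
  have hind : P (⋂ m ∈ M0, E m) = ∏ m ∈ M0, P (E m) := by
    have := hD3b.meas_biInter (S := Finset.univ) (s := fun i : {m // m ∈ M0} => E i.1)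
      (fun i _ => hEmeas i.1)
    have hset : (⋂ i ∈ (Finset.univ : Finset {m // m ∈ M0}), E i.1) = ⋂ m ∈ M0, E m := by
      ext x
      simp only [Set.mem_iInter, Finset.mem_univ, forall_true_left]
      constructor
      · intro h m hm; exact h ⟨m, hm⟩
      · intro h i; exact h i.1 i.2
    rw [hset] at this
    rw [this]
    rw [Finset.prod_coe_sort M0 (fun m => P (E m))]
  -- Step 3: compute each factor
  have hfac : ∀ m ∈ M0, P (E m) = ENNReal.ofReal (1 - A m w) := by
    intro m hm
    have hAw : A m w ∈ Set.Icc (0:ℝ) 1 := hArange m w hw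
    have hmeas' : Measurable (δ m (A m w)) := hmeas m _ hAw
    set T : Set X := (δ m (A m w)) ⁻¹' {1} with hT
    have hTmeas : MeasurableSet T := hmeas' (measurableSet_singleton 1)
    have hfun : (fun x => δ m (A m w) x) = T.indicator (fun _ => (1:ℝ)) := by
      funext x
      rcases hvals m _ hAw x with h0 | h1
      · rw [h0]
        have : x ∉ T := by
          simp only [hT, Set.mem_preimage, Set.mem_singleton_iff]
          rw [h0]; norm_num
        rw [Set.indicator_of_notMem this]
      · rw [h1]
        have : x ∈ T := by
          simp only [hT, Set.mem_preimage, Set.mem_singleton_iff, h1]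
        rw [Set.indicator_of_mem this]
    have hint : ∫ x, δ m (A m w) x ∂P = (P T).toReal := by
      rw [hfun, integral_indicator_const (1:ℝ) hTmeas]
      simp
      rfl
    have hPT : P T = ENNReal.ofReal (A m w) := by
      have h4 := hD4 m hm (A m w) hAw
      rw [hint] at h4
      rw [← h4, ENNReal.ofReal_toReal (measure_ne_top P T)]
    have hET : E m = Tᶜ := by
      ext x
      simp only [hE, hT, Set.mem_preimage, Set.mem_singleton_iff, Set.mem_compl_iff]
      rcases hvals m _ hAw x with h0 | h1
      · simp [h0]
      · simp [h1]
    rw [hET, prob_compl_eq_one_sub hTmeas, hPT,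
      ENNReal.ofReal_sub 1 hAw.1, ENNReal.ofReal_one]
  -- Combine
  rw [measure_congr hae, hind, ENNReal.ofReal_prod_of_nonneg
    (fun m hm => by have := (hArange m w hw).2; linarith)]
  exact Finset.prod_congr rfl hfac

end
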